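/- Let L be a finite-dimensional minimal nonnilpotent left Leibniz algebra with self-normalizing maximal subalgebra M of core N. Then either L is generated by a single element (cyclic), or Leib(L) ⊆ N. -/

import Mathlib

set_option linter.unnecessarySimpa false

/-- The left Leibniz identity for a bilinear bracket `B`. -/
def LeibnizId {F L : Type*} [Field F] [AddCommGroup L] [Module F L]
    (B : L →ₗ[F] L →ₗ[F] L) : Prop :=
  ∀ a b c : L, B a (B b c) = B (B a b) c + B b (B a c)

/-- The span of all brackets `[s,t]` with `s ∈ S`, `t ∈ T`. -/
def lbrk {F L : Type*} [Field F] [AddCommGroup L] [Module F L]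
    (B : L →ₗ[F] L →ₗ[F] L) (S T : Submodule F L) : Submodule F L :=
  Submodule.span F {z : L | ∃ s ∈ S, ∃ t ∈ T, z = B s t}

/-- A subspace closed under the bracket. -/
def IsLeibSubalg {F L : Type*} [Field F] [AddCommGroup L] [Module F L]
    (B : L →ₗ[F] L →ₗ[F] L) (S : Submodule F L) : Prop :=
  ∀ x ∈ S, ∀ y ∈ S, B x y ∈ S

/-- A (two-sided) ideal. -/
def IsLeibIdeal {F L : Type*} [Field F] [AddCommGroup L] [Module F L]
    (B : L →ₗ[F] L →ₗ[F] L) (S : Submodule F L) : Prop :=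
  (∀ x : L, ∀ y ∈ S, B x y ∈ S) ∧ (∀ y ∈ S, ∀ x : L, B y x ∈ S)

/-- Lower central series: `L^1 = L`, `L^{n+1} = [L, L^n]`. -/
def leibLCS {F L : Type*} [Field F] [AddCommGroup L] [Module F L]
    (B : L →ₗ[F] L →ₗ[F] L) : ℕ → Submodule F L
  | 0 => ⊤
  | n + 1 => lbrk B ⊤ (leibLCS B n)

def LeibIsNilpotent {F L : Type*} [Field F] [AddCommGroup L] [Module F L]
    (B : L →ₗ[F] L →ₗ[F] L) : Prop :=
  ∃ n, leibLCS B n = ⊥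

/-- Lower central series of a subalgebra `S`. -/
def leibLCSIn {F L : Type*} [Field F] [AddCommGroup L] [Module F L]
    (B : L →ₗ[F] L →ₗ[F] L) (S : Submodule F L) : ℕ → Submodule F L
  | 0 => S
  | n + 1 => lbrk B S (leibLCSIn B S n)

/-- A subalgebra `S` is nilpotent (as an algebra in its own right). -/
def LeibSubalgNilpotent {F L : Type*} [Field F] [AddCommGroup L] [Module F L]
    (B : L →ₗ[F] L →ₗ[F] L) (S : Submodule F L) : Prop :=
  ∃ n, leibLCSIn B S n = ⊥

/-- Derived series. -/
def leibDerived {F L : Type*} [Field F] [AddCommGroup L] [Module F L]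
    (B : L →ₗ[F] L →ₗ[F] L) : ℕ → Submodule F L
  | 0 => ⊤
  | n + 1 => lbrk B (leibDerived B n) (leibDerived B n)

def LeibIsSolvable {F L : Type*} [Field F] [AddCommGroup L] [Module F L]
    (B : L →ₗ[F] L →ₗ[F] L) : Prop :=
  ∃ n, leibDerived B n = ⊥

/-- The normalizer of a subspace `S`: elements `x` with `[x,S] ⊆ S` and `[S,x] ⊆ S`. -/
def leibNormalizer {F L : Type*} [Field F] [AddCommGroup L] [Module F L]
    (B : L →ₗ[F] L →ₗ[F] L) (S : Submodule F L) : Submodule F L where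
  carrier := {x : L | ∀ m ∈ S, B x m ∈ S ∧ B m x ∈ S}
  add_mem' := by
    intro x y hx hy m hm
    constructor
    · have := S.add_mem (hx m hm).1 (hy m hm).1
      simpa [map_add] using this
    · have := S.add_mem (hx m hm).2 (hy m hm).2
      simpa [map_add] using this
  zero_mem' := by
    intro m hm
    constructor
    · simpa [map_zero] using S.zero_mem
    · simpa [map_zero] using S.zero_mem
  smul_mem' := by
    intro c x hx m hm
    constructor
    · have := S.smul_mem c (hx m hm).1
      simpa [map_smul] using this
    · have := S.smul_mem c (hx m hm).2
      simpa [map_smul] using this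

/-- `Leib(L)`: the span of all squares. -/
def leibLeib {F L : Type*} [Field F] [AddCommGroup L] [Module F L]
    (B : L →ₗ[F] L →ₗ[F] L) : Submodule F L :=
  Submodule.span F {z : L | ∃ y : L, z = B y y}

/-- A maximal (proper) subalgebra. -/
def IsMaxSubalg {F L : Type*} [Field F] [AddCommGroup L] [Module F L]
    (B : L →ₗ[F] L →ₗ[F] L) (S : Submodule F L) : Prop :=
  IsLeibSubalg B S ∧ S ≠ ⊤ ∧ ∀ T : Submodule F L, IsLeibSubalg B T → S < T → T = ⊤

/-- `N` is the core of `M`: the largest ideal of `L` contained in `M`. -/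
def IsCore {F L : Type*} [Field F] [AddCommGroup L] [Module F L]
    (B : L →ₗ[F] L →ₗ[F] L) (M N : Submodule F L) : Prop :=
  IsLeibIdeal B N ∧ N ≤ M ∧ ∀ C : Submodule F L, IsLeibIdeal B C → C ≤ M → C ≤ N

/-- Minimal nonnilpotent: nonnilpotent, solvable, all proper subalgebras nilpotent. -/
def MinNonnilpotent {F L : Type*} [Field F] [AddCommGroup L] [Module F L]
    (B : L →ₗ[F] L →ₗ[F] L) : Prop :=
  ¬ LeibIsNilpotent B ∧ LeibIsSolvable B ∧
    ∀ S : Submodule F L, IsLeibSubalg B S → S ≠ ⊤ → LeibSubalgNilpotent B S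

/-- Cyclic: generated as an algebra by a single element. -/
def LeibCyclic {F L : Type*} [Field F] [AddCommGroup L] [Module F L]
    (B : L →ₗ[F] L →ₗ[F] L) : Prop :=
  ∃ z : L, ∀ S : Submodule F L, IsLeibSubalg B S → z ∈ S → S = ⊤

section aux
variable {F L : Type*} [Field F] [AddCommGroup L] [Module F L] (B : L →ₗ[F] L →ₗ[F] L)

theorem st10_mem_lbrk {S T : Submodule F L} {s t : L} (hs : s ∈ S) (ht : t ∈ T) :
    B s t ∈ lbrk B S T :=
  Submodule.subset_span ⟨s, hs, t, ht, rfl⟩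

theorem st10_lbrk_le {S T U : Submodule F L} (h : ∀ s ∈ S, ∀ t ∈ T, B s t ∈ U) :
    lbrk B S T ≤ U := by
  apply Submodule.span_le.2
  rintro z ⟨s, hs, t, ht, rfl⟩
  exact h s hs t ht

theorem st10_sq_ann (hB : LeibnizId B) (y x : L) : B (B y y) x = 0 := by
  have h := hB y y x
  have := congrArg (fun u => u - B y (B y x)) h
  simpa using this.symm

theorem st10_leib_ann (hB : LeibnizId B) {q : L} (hq : q ∈ leibLeib B) (x : L) :
    B q x = 0 := by
  have : q ∈ LinearMap.ker (B.flip x) := by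
    apply Submodule.span_le.2 ?_ hq
    rintro z ⟨y, rfl⟩
    simp [LinearMap.mem_ker, st10_sq_ann B hB y x]
  simpa [LinearMap.mem_ker] using this

theorem st10_sum_sq (u v : L) : B u v + B v u ∈ leibLeib B := by
  have h : B u v + B v u = B (u+v) (u+v) - B u u - B v v := by
    simp [map_add]; abel
  rw [h]
  exact Submodule.sub_mem _ (Submodule.sub_mem _
    (Submodule.subset_span ⟨u+v, rfl⟩) (Submodule.subset_span ⟨u, rfl⟩))
    (Submodule.subset_span ⟨v, rfl⟩)

theorem st10_leib_left (hB : LeibnizId B) (x : L) {q : L} (hq : q ∈ leibLeib B) :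
    B x q ∈ leibLeib B := by
  have : q ∈ (leibLeib B).comap (B x) := by
    apply Submodule.span_le.2 ?_ hq
    rintro z ⟨y, rfl⟩
    have h := hB x y y
    have : B x (B y y) = B (B x y) y + B y (B x y) := h
    simp only [SetLike.mem_coe, Submodule.mem_comap, this]
    exact st10_sum_sq B (B x y) y
  simpa using this

end aux

section aux2
variable {F L : Type*} [Field F] [AddCommGroup L] [Module F L] (B : L →ₗ[F] L →ₗ[F] L)

/-- iterated left powers -/
def st10pow (z : L) : ℕ → L
  | 0 => z
  | k + 1 => B z (st10pow z k)

theorem st10_pow_mem {S : Submodule F L} {z : L} (hz : z ∈ S) :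
    ∀ k, st10pow B z k ∈ leibLCSIn B S k
  | 0 => hz
  | k + 1 => st10_mem_lbrk B hz (st10_pow_mem hz k)

theorem st10_pow_stable {z : L} {n : ℕ} (h : st10pow B z n = 0) :
    ∀ m, n ≤ m → st10pow B z m = 0 := by
  intro m hm
  induction m, hm using Nat.le_induction with
  | base => exact h
  | succ m hm ih => simp [st10pow, ih]

theorem st10_lbrk_bot (S : Submodule F L) : lbrk B S ⊥ = ⊥ := by
  apply le_bot_iff.1
  apply st10_lbrk_le
  intro s _ t ht
  simp [Submodule.mem_bot] at ht ⊢
  simp [ht]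

theorem st10_lcsIn_stable {S : Submodule F L} {n : ℕ} (h : leibLCSIn B S n = ⊥) :
    ∀ m, n ≤ m → leibLCSIn B S m = ⊥ := by
  intro m hm
  induction m, hm using Nat.le_induction with
  | base => exact h
  | succ m hm ih => rw [leibLCSIn, ih, st10_lbrk_bot]

end aux2

def st10Wseq {F L : Type*} [Field F] [AddCommGroup L] [Module F L]
    (B : L →ₗ[F] L →ₗ[F] L) (M W : Submodule F L) : ℕ → Submodule F L
  | 0 => W
  | k + 1 => lbrk B M (st10Wseq B M W k)

section engel
variable {F L : Type*} [Field F] [AddCommGroup L] [Module F L] [FiniteDimensional F L]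
  (B : L →ₗ[F] L →ₗ[F] L)

attribute [local instance 100] LieRing.ofAssociativeRing

theorem st10_engel (hB : LeibnizId B) (M W : Submodule F L)
    (hMsub : ∀ x ∈ M, ∀ y ∈ M, B x y ∈ M)
    (hstab : ∀ m ∈ M, ∀ u ∈ W, B m u ∈ W)
    (hnil : ∀ m ∈ M, ∀ w ∈ W, ∃ k, ((B m) ^ k) w = 0) :
    ∃ k, st10Wseq B M W k = ⊥ := by
  classical
  let φ : ↥M →ₗ[F] Module.End F ↥W :=
    { toFun := fun m => (B m.1).restrict (fun u hu => hstab m.1 m.2 u hu)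
      map_add' := by
        intro m m'
        ext w
        simp [LinearMap.restrict_coe_apply, map_add]
      map_smul' := by
        intro c m
        ext w
        simp [LinearMap.restrict_coe_apply, map_smul] }
  have hφ_apply : ∀ (m : ↥M) (w : ↥W), ((φ m w : ↥W) : L) = B m.1 w.1 := by
    intro m w; rfl
  let E : LieSubalgebra F (Module.End F ↥W) :=
    { LinearMap.range φ with
      lie_mem' := by
        intro x y hx hy
        replace hx : x ∈ LinearMap.range φ := hx
        replace hy : y ∈ LinearMap.range φ := hy
        simp only [LinearMap.mem_range] at hx hy
        show ⁅x, y⁆ ∈ LinearMap.range φ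
        obtain ⟨m1, rfl⟩ := hx
        obtain ⟨m2, rfl⟩ := hy
        refine ⟨⟨B m1.1 m2.1, hMsub _ m1.2 _ m2.2⟩, ?_⟩
        ext w
        have h := hB m1.1 m2.1 w.1
        have h2 : ((⁅φ m1, φ m2⁆ w : ↥W) : L)
            = B m1.1 (B m2.1 w.1) - B m2.1 (B m1.1 w.1) := by
          simp only [Ring.lie_def, LinearMap.sub_apply, Module.End.mul_apply]
          push_cast [hφ_apply]
          rfl
        rw [hφ_apply, h2, h]
        abel }
  have hEnil : ∀ x : E, IsNilpotent (x : Module.End F ↥W) := by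
    rintro ⟨x, hx⟩
    obtain ⟨m, rfl⟩ : ∃ m : ↥M, φ m = x := hx
    rw [Module.End.isNilpotent_iff_of_finite]
    intro w
    obtain ⟨k, hk⟩ := hnil m.1 m.2 w.1 w.2
    refine ⟨k, ?_⟩
    have hcoe : ∀ n : ℕ, (((φ m ^ n) w : ↥W) : L) = ((B m.1) ^ n) w.1 := by
      intro n
      induction n with
      | zero => simp
      | succ n ih =>
        rw [pow_succ', pow_succ', Module.End.mul_apply, Module.End.mul_apply, hφ_apply, ih]
    rw [Subtype.ext_iff, hcoe]
    exact hk
  have hEngel : ∃ k, LieModule.lowerCentralSeries F E ↥W k = ⊥ := by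
    have hE := LieAlgebra.isEngelian_of_isNoetherian (R := F) (L := E) ↥W (by
      intro x
      have hx : LieModule.toEnd F E ↥W x = (x : Module.End F ↥W) := by ext w; rfl
      rw [hx]; exact hEnil x)
    exact (LieModule.isNilpotent_iff F E ↥W).mp hE
  obtain ⟨k, hk⟩ := hEngel
  refine ⟨k, le_bot_iff.1 ?_⟩
  have hcomp : ∀ j, st10Wseq B M W j ≤
      Submodule.map W.subtype (LieModule.lowerCentralSeries F E ↥W j).toSubmodule := by
    intro j
    induction j with
    | zero =>
      rw [LieModule.lowerCentralSeries_zero]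
      rw [LieSubmodule.top_toSubmodule, Submodule.map_subtype_top]
      exact le_rfl
    | succ j ih =>
      apply st10_lbrk_le
      intro m hm w hw
      obtain ⟨w', hw', rfl⟩ := Submodule.mem_map.1 (ih hw)
      set x : E := ⟨φ ⟨m, hm⟩, ⟨⟨m, hm⟩, rfl⟩⟩ with hxdef
      have hbr : ⁅x, w'⁆ ∈ LieModule.lowerCentralSeries F E ↥W (j + 1) := by
        rw [LieModule.lowerCentralSeries_succ]
        exact LieSubmodule.lie_mem_lie (LieSubmodule.mem_top x) hw'
      refine Submodule.mem_map.2 ⟨⁅x, w'⁆, hbr, ?_⟩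
      show (⁅x, w'⁆ : ↥W).1 = B m w'.1
      exact hφ_apply ⟨m, hm⟩ w'
  calc st10Wseq B M W k
      ≤ Submodule.map W.subtype (LieModule.lowerCentralSeries F E ↥W k).toSubmodule := hcomp k
    _ = ⊥ := by rw [hk, LieSubmodule.bot_toSubmodule, Submodule.map_bot]

end engel

theorem st10_Wseq_stable {F L : Type*} [Field F] [AddCommGroup L] [Module F L]
    (B : L →ₗ[F] L →ₗ[F] L) {M W : Submodule F L} {n : ℕ} (h : st10Wseq B M W n = ⊥) :
    ∀ m, n ≤ m → st10Wseq B M W m = ⊥ := by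
  intro m hm
  induction m, hm using Nat.le_induction with
  | base => exact h
  | succ m hm ih => rw [st10Wseq, ih, st10_lbrk_bot]


/-- for minimal nonnilpotent `L` with self-normalizing maximal subalgebra `M`
of core `N`, either `L` is cyclic or `Leib(L) ⊆ N`. -/
theorem stmt10 {F L : Type*} [Field F] [AddCommGroup L] [Module F L] [FiniteDimensional F L]
    (B : L →ₗ[F] L →ₗ[F] L) (hB : LeibnizId B) (hmin : MinNonnilpotent B)
    (M N : Submodule F L) (hM : IsMaxSubalg B M) (hself : leibNormalizer B M = M)
    (hN : IsCore B M N) :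
    LeibCyclic B ∨ leibLeib B ≤ N := by
  classical
  by_cases hQM : leibLeib B ≤ M
  · right
    refine hN.2.2 _ ⟨?_, ?_⟩ hQM
    · intro x qq hq; exact st10_leib_left B hB x hq
    · intro qq hq x; rw [st10_leib_ann B hB hq x]; exact Submodule.zero_mem _
  · left
    by_contra hcyc
    rw [LeibCyclic] at hcyc; push_neg at hcyc
    have factA : ∀ z : L, ∃ n, st10pow B z n = 0 := by
      intro z
      obtain ⟨S, hS, hzS, hSne⟩ := hcyc z
      obtain ⟨n, hn⟩ := hmin.2.2 S hS hSne
      refine ⟨n, ?_⟩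
      have hmem := st10_pow_mem B hzS n
      rw [hn] at hmem
      simpa using hmem
    obtain ⟨y, hy⟩ : ∃ y : L, B y y ∉ M := by
      by_contra h; push_neg at h
      exact hQM (Submodule.span_le.2 (by rintro z ⟨y, rfl⟩; exact h y))
    have hqQ : B y y ∈ leibLeib B := Submodule.subset_span ⟨y, rfl⟩
    set W : Submodule F L :=
      sInf {U : Submodule F L | B y y ∈ U ∧ ∀ m ∈ M, ∀ u ∈ U, B m u ∈ U} with hWdef
    have hqW : B y y ∈ W := Submodule.mem_sInf.2 (fun U hU => hU.1)
    have hWstab : ∀ m ∈ M, ∀ u ∈ W, B m u ∈ W := by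
      intro m hm u hu
      exact Submodule.mem_sInf.2 (fun U hU => hU.2 m hm u (Submodule.mem_sInf.1 hu U hU))
    have hWQ : W ≤ leibLeib B :=
      sInf_le ⟨hqQ, fun m _ u hu => st10_leib_left B hB m hu⟩
    have hWann : ∀ w ∈ W, ∀ x : L, B w x = 0 := fun w hw x => st10_leib_ann B hB (hWQ hw) x
    have hMW : M ⊔ W = ⊤ := by
      apply hM.2.2 (M ⊔ W) ?_ ?_
      · intro x hx z hz
        obtain ⟨m, hm, w, hw, rfl⟩ := Submodule.mem_sup.1 hx
        obtain ⟨m', hm', w', hw', rfl⟩ := Submodule.mem_sup.1 hz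
        have hzero : ∀ t, B w t = 0 := hWann w hw
        have heq : B (m + w) (m' + w') = B m m' + B m w' := by
          simp only [map_add, LinearMap.add_apply, hzero, add_zero]
        rw [heq]
        exact Submodule.add_mem _ (Submodule.mem_sup_left (hM.1 m hm m' hm'))
          (Submodule.mem_sup_right (hWstab m hm w' hw'))
      · refine lt_of_le_of_ne le_sup_left (fun h => hy ?_)
        have : B y y ∈ M ⊔ W := Submodule.mem_sup_right hqW
        rwa [← h] at this
    obtain ⟨nM, hnM⟩ := hmin.2.2 M hM.1 hM.2.1
    have hnil : ∀ m ∈ M, ∀ w ∈ W, ∃ k, ((B m) ^ k) w = 0 := by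
      intro m hm w hw
      obtain ⟨n0, hn0⟩ := factA (m + w)
      have key : ∀ k, st10pow B (m + w) k = st10pow B m k + ((B m) ^ k) w := by
        intro k; induction k with
        | zero => simp [st10pow]
        | succ k ih =>
          have hann1 : ∀ t, B w t = 0 := hWann w hw
          show B (m + w) (st10pow B (m + w) k) = st10pow B m (k+1) + ((B m) ^ (k+1)) w
          rw [ih, pow_succ']
          simp only [map_add, LinearMap.add_apply, hann1, add_zero, Module.End.mul_apply]
          rfl
      refine ⟨max n0 nM, ?_⟩
      have h1 : st10pow B (m + w) (max n0 nM) = 0 :=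
        st10_pow_stable B hn0 _ (le_max_left _ _)
      have h2 : st10pow B m (max n0 nM) = 0 := by
        have hmem := st10_pow_mem B hm (max n0 nM)
        rw [st10_lcsIn_stable B hnM _ (le_max_right _ _)] at hmem
        simpa using hmem
      have := key (max n0 nM)
      rw [h1, h2, zero_add] at this
      exact this.symm
    obtain ⟨kW, hkW⟩ := st10_engel B hB M W hM.1 hWstab hnil
    have hcomp : ∀ k, leibLCS B k ≤ leibLCSIn B M k ⊔ st10Wseq B M W k := by
      intro k; induction k with
      | zero =>
        show (⊤ : Submodule F L) ≤ M ⊔ W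
        rw [hMW]
      | succ k ih =>
        show lbrk B ⊤ (leibLCS B k) ≤ _
        apply st10_lbrk_le
        intro x _ t ht
        have hx : x ∈ M ⊔ W := by rw [hMW]; trivial
        obtain ⟨m, hm, w, hw, rfl⟩ := Submodule.mem_sup.1 hx
        obtain ⟨a, ha, b, hb, rfl⟩ := Submodule.mem_sup.1 (ih ht)
        have hann1 : ∀ t, B w t = 0 := hWann w hw
        have heq : B (m + w) (a + b) = B m a + B m b := by
          simp only [map_add, LinearMap.add_apply, hann1, add_zero]
        rw [heq]
        exact Submodule.add_mem _ (Submodule.mem_sup_left (st10_mem_lbrk B hm ha))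
          (Submodule.mem_sup_right (st10_mem_lbrk B hm hb))
    refine hmin.1 ⟨max nM kW, le_bot_iff.1 ?_⟩
    calc leibLCS B (max nM kW)
        ≤ leibLCSIn B M (max nM kW) ⊔ st10Wseq B M W (max nM kW) := hcomp _
      _ = ⊥ := by
          rw [st10_lcsIn_stable B hnM _ (le_max_left _ _),
            st10_Wseq_stable B hkW _ (le_max_right _ _), sup_idem]
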